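/- Let r ∈ {ℓ,...,n} be the largest index with δ_r > δ (with δ_ℓ := +∞). Then min_{q ∈ B_{χ²}(p,δ)} E_q(f) equals μ_r - σ_r·√(m_r·δ - (1-m_r)) if r > ℓ, and equals f(x_1) if r = ℓ. -/

import Mathlib

open Finset

lemma chi_point (P M T Mu Fi : ℝ) (hP : P ≠ 0) (hM : M ≠ 0) :
    (P/M*(1 - T*(Fi - Mu)) - P)^2/P
      = ((1 - M + T*Mu)^2/M^2)*P - (2*(1 - M + T*Mu)*T/M^2)*(P*Fi) + (T^2/M^2)*(P*Fi^2) := by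
  field_simp
  ring

lemma key_identity (M pk fk μ σ2 : ℝ) (hM : M ≠ 0) (hMk : M + pk ≠ 0)
    (hc : fk - μ ≠ 0) :
    (1/(M+pk)) * (((M*(σ2+μ^2) + pk*fk^2)/(M+pk) - ((M*μ+pk*fk)/(M+pk))^2) / (fk - (M*μ+pk*fk)/(M+pk))^2 + 1 - (M+pk))
      = (σ2 / (fk - μ)^2 + 1 - M) / M := by
  have h1 : fk - (M*μ+pk*fk)/(M+pk) = M*(fk - μ)/(M+pk) := by field_simp; ring
  have h2 : (M*(σ2+μ^2) + pk*fk^2)/(M+pk) - ((M*μ+pk*fk)/(M+pk))^2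
      = M*σ2/(M+pk) + (fk-μ)^2*pk*M/(M+pk)^2 := by field_simp; ring
  rw [h1, h2]
  have h3 : (M*(fk - μ)/(M+pk))^2 = M^2*(fk-μ)^2/(M+pk)^2 := by
    rw [div_pow, mul_pow]
  rw [h3]
  have h4 : (M*σ2/(M+pk) + (fk-μ)^2*pk*M/(M+pk)^2) / (M^2*(fk-μ)^2/(M+pk)^2)
      = σ2*(M+pk)/(M*(fk-μ)^2) + pk/M := by
    rw [div_eq_iff (by positivity : M^2*(fk-μ)^2/(M+pk)^2 ≠ 0)]
    field_simp
  rw [h4]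
  field_simp
  ring

set_option maxHeartbeats 3200000 in
theorem chi2_lower_expectation
    (n : ℕ) (hn : 0 < n) (f p : Fin n → ℝ) (hf : Monotone f)
    (hp0 : ∀ i, 0 < p i) (hp1 : ∑ i, p i = 1)
    (δ : ℝ) (hδ : 0 ≤ δ)
    (ℓ : Fin n) (hℓ : f ℓ = f ⟨0, hn⟩)
    (hℓmax : ∀ i, f i = f ⟨0, hn⟩ → i ≤ ℓ)
    (m μ σ2 δc : Fin n → ℝ)
    (hm : m = fun j => ∑ i ∈ Finset.Iic j, p i)
    (hμ : μ = fun j => (1 / m j) * ∑ i ∈ Finset.Iic j, p i * f i)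
    (hσ2 : σ2 = fun j => (1 / m j) * ∑ i ∈ Finset.Iic j, p i * (f i - μ j) ^ 2)
    (hδc : δc = fun j => (1 / m j) * (σ2 j / (f j - μ j) ^ 2 + 1 - m j))
    (r : Fin n) (hrℓ : ℓ ≤ r)
    (hr1 : ℓ < r → δ < δc r)
    (hr2 : ∀ k : Fin n, r < k → δc k ≤ δ) :
    let B : Set (Fin n → ℝ) :=
      {q | ((∀ i, 0 ≤ q i) ∧ ∑ i, q i = 1) ∧ ∑ i, (q i - p i) ^ 2 / p i ≤ δ}
    IsLeast ((fun q : Fin n → ℝ => ∑ i, q i * f i) '' B)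
      (if r = ℓ then f ⟨0, hn⟩
       else μ r - Real.sqrt (σ2 r) * Real.sqrt (m r * δ - (1 - m r))) := by
  intro B
  have hp0' : ∀ i, p i ≠ 0 := fun i => (hp0 i).ne'
  set z : Fin n := ⟨0, hn⟩ with hz
  have hzle : ∀ j : Fin n, z ∈ Iic j := fun j => by
    simp only [mem_Iic, Fin.le_def]; exact Nat.zero_le _
  have hmpos : ∀ j, 0 < m j := fun j => by
    simp only [hm]; exact Finset.sum_pos (fun i _ => hp0 i) ⟨j, by simp⟩
  have hmne : ∀ j, m j ≠ 0 := fun j => (hmpos j).ne'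
  have hsplit : ∀ (j : Fin n) (g : Fin n → ℝ),
      ∑ i, g i = ∑ i ∈ Iic j, g i + ∑ i ∈ Ioi j, g i := by
    intro j g
    have hc : (Iic j)ᶜ = Ioi j := by
      ext i; simp only [mem_compl, mem_Iic, mem_Ioi]; exact not_le
    rw [← Finset.sum_add_sum_compl (Iic j) g, hc]
  have hS1 : ∀ j, ∑ i ∈ Iic j, p i * f i = m j * μ j := by
    intro j; simp only [hμ]; field_simp
    exact (mul_div_cancel_right₀ _ (hmne j)).symm
  have hS2σ : ∀ j, ∑ i ∈ Iic j, p i * f i ^ 2 = m j * σ2 j + m j * μ j ^ 2 := by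
    intro j
    have e1 : ∑ i ∈ Iic j, p i * (f i - μ j) ^ 2
        = (∑ i ∈ Iic j, p i * f i ^ 2) - 2 * μ j * (∑ i ∈ Iic j, p i * f i)
          + μ j ^ 2 * (∑ i ∈ Iic j, p i) := by
      rw [Finset.mul_sum, Finset.mul_sum, ← Finset.sum_sub_distrib, ← Finset.sum_add_distrib]
      exact Finset.sum_congr rfl (fun i _ => by ring)
    have e2 : m j * σ2 j = ∑ i ∈ Iic j, p i * (f i - μ j) ^ 2 := by
      simp only [hσ2]; field_simp
      exact mul_div_cancel_left₀ _ (hmne j)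
    have e3 : (∑ i ∈ Iic j, p i) = m j := by simp only [hm]
    rw [e1, e3, hS1 j] at e2
    nlinarith [e2]
  have hσnn : ∀ j, 0 ≤ σ2 j := by
    intro j
    have : 0 ≤ ∑ i ∈ Iic j, p i * (f i - μ j) ^ 2 :=
      Finset.sum_nonneg (fun i _ => mul_nonneg (hp0 i).le (sq_nonneg _))
    simp only [hσ2]
    exact mul_nonneg (one_div_pos.mpr (hmpos j)).le this
  have hf0 : ∀ i, f z ≤ f i := fun i => hf (by simp only [Fin.le_def]; exact Nat.zero_le _)
  have hflt : ∀ k : Fin n, ℓ < k → f z < f k := by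
    intro k hlk
    refine lt_of_le_of_ne (hf0 k) (fun h => ?_)
    exact absurd (hℓmax k h.symm) (not_le.mpr hlk)
  have hμlt : ∀ j k : Fin n, j ≤ k → ℓ < k → μ j < f k := by
    intro j k hjk hlk
    have hlt : ∑ i ∈ Iic j, p i * f i < ∑ i ∈ Iic j, p i * f k := by
      refine Finset.sum_lt_sum (fun i hi => ?_) ⟨z, hzle j, ?_⟩
      · exact mul_le_mul_of_nonneg_left (hf (le_trans (mem_Iic.mp hi) hjk)) (hp0 i).le
      · exact mul_lt_mul_of_pos_left (hflt k hlk) (hp0 z)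
    have h2 : ∑ i ∈ Iic j, p i * f k = m j * f k := by
      rw [← Finset.sum_mul]; simp only [hm]
    have h3 : m j * μ j < m j * f k := by rw [← hS1 j]; rw [h2] at hlt; exact hlt
    exact lt_of_mul_lt_mul_left h3 (hmpos j).le
  -- δc at successor index
  have hδc_succ : ∀ j k : Fin n, (k:ℕ) = (j:ℕ)+1 → ℓ ≤ j →
      δc k = (σ2 j / (f k - μ j)^2 + 1 - m j) / m j := by
    intro j k hk hlj
    have hjk : j ≤ k := by simp only [Fin.le_def]; omega
    have hlk : ℓ < k := by
      simp only [Fin.lt_def, Fin.le_def] at hlj ⊢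
      omega
    have hins : Iic k = insert k (Iic j) := by
      ext i
      simp only [Finset.mem_Iic, Finset.mem_insert, Fin.le_def, Fin.ext_iff]
      omega
    have hnotmem : k ∉ Iic j := by
      simp only [Finset.mem_Iic, Fin.le_def]; omega
    have hmk : m k = m j + p k := by
      simp only [hm]; rw [hins, Finset.sum_insert hnotmem]; ring
    have hS1k : ∑ i ∈ Iic k, p i * f i = p k * f k + m j * μ j := by
      rw [hins, Finset.sum_insert hnotmem, hS1]
    have hS2k : ∑ i ∈ Iic k, p i * f i ^ 2 = p k * f k ^ 2 + (m j * σ2 j + m j * μ j ^ 2) := by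
      rw [hins, Finset.sum_insert hnotmem, hS2σ]
    have hc : f k - μ j ≠ 0 := (sub_pos.mpr (hμlt j k hjk hlk)).ne'
    have hMk : m j + p k ≠ 0 := by
      have := hmpos j; have := hp0 k; intro h; linarith
    have hμk : μ k = (m j * μ j + p k * f k) / (m j + p k) := by
      have h1 := hS1 k
      rw [hS1k, hmk] at h1
      rw [eq_div_iff hMk]
      linarith
    have hσ2k : σ2 k = (m j * (σ2 j + μ j ^ 2) + p k * f k ^ 2) / (m j + p k)
        - ((m j * μ j + p k * f k) / (m j + p k)) ^ 2 := by
      have h1 := hS2σ k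
      rw [hS2k, hμk, hmk] at h1
      have h2 : σ2 k = ((p k * f k ^ 2 + (m j * σ2 j + m j * μ j ^ 2))
          - (m j + p k) * ((m j * μ j + p k * f k) / (m j + p k)) ^ 2) / (m j + p k) := by
        rw [eq_div_iff hMk]
        linarith [h1]
      rw [h2, sub_div, mul_div_cancel_left₀ _ hMk]
      ring
    have e := key_identity (m j) (p k) (f k) (μ j) (σ2 j) (hmne j) hMk hc
    simp only [hδc]
    rw [hmk, hμk, hσ2k]
    exact e
  have hmlast : ∀ j : Fin n, (j:ℕ)+1 = n → m j = 1 := by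
    intro j hj
    have huniv : Iic j = univ := by
      ext i; simp only [mem_Iic, mem_univ, iff_true, Fin.le_def]; omega
    simp only [hm]; rw [huniv]; exact hp1
  have hIoi_p : ∀ j : Fin n, ∑ i ∈ Ioi j, p i = 1 - m j := by
    intro j
    have := hsplit j p
    rw [hp1] at this
    have h3 : (∑ i ∈ Iic j, p i) = m j := by simp only [hm]
    rw [h3] at this; linarith
  by_cases hrl : r = ℓ
  · -- case r = ℓ : minimum is f z
    rw [if_pos hrl]
    have hconst : ∀ i, i ≤ ℓ → f i = f z := fun i hi =>
      le_antisymm (le_trans (hf hi) (le_of_eq hℓ)) (hf0 i)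
    have hμℓ : μ ℓ = f z := by
      have h1 := hS1 ℓ
      have h2 : ∑ i ∈ Iic ℓ, p i * f i = (∑ i ∈ Iic ℓ, p i) * f z := by
        rw [Finset.sum_mul]
        exact Finset.sum_congr rfl (fun i hi => by rw [hconst i (mem_Iic.mp hi)])
      have h3 : (∑ i ∈ Iic ℓ, p i) = m ℓ := by simp only [hm]
      rw [h2, h3] at h1
      exact (mul_left_cancel₀ (hmne ℓ) h1).symm
    have hσℓ : σ2 ℓ = 0 := by
      simp only [hσ2]
      rw [Finset.sum_eq_zero, mul_zero]
      intro i hi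
      rw [hμℓ, hconst i (mem_Iic.mp hi)]
      ring
    have hkey1 : (1 - m ℓ)/m ℓ ≤ δ := by
      by_cases hl : (ℓ:ℕ)+1 = n
      · rw [hmlast ℓ hl]; simpa using hδ
      · have hlt : (ℓ:ℕ)+1 < n := lt_of_le_of_ne ℓ.isLt hl
        have h := hr2 ⟨(ℓ:ℕ)+1, hlt⟩ (by rw [hrl]; simp [Fin.lt_def])
        rw [hδc_succ ℓ ⟨(ℓ:ℕ)+1, hlt⟩ rfl le_rfl, hσℓ, zero_div, zero_add] at h
        exact h
    set q0 : Fin n → ℝ := fun i => if i ≤ ℓ then p i / m ℓ else 0 with hq0def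
    have hq0Ioi : ∀ i ∈ Ioi ℓ, q0 i = 0 := fun i hi => by
      simp only [hq0def, if_neg (not_le.mpr (mem_Ioi.mp hi))]
    have hq0sum : ∑ i, q0 i = 1 := by
      rw [hsplit ℓ, Finset.sum_eq_zero hq0Ioi, add_zero]
      have : ∑ i ∈ Iic ℓ, q0 i = (∑ i ∈ Iic ℓ, p i) / m ℓ := by
        rw [Finset.sum_div]
        exact Finset.sum_congr rfl (fun i hi => by
          simp only [hq0def, if_pos (mem_Iic.mp hi)])
      rw [this]
      have h3 : (∑ i ∈ Iic ℓ, p i) = m ℓ := by simp only [hm]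
      rw [h3, div_self (hmne ℓ)]
    constructor
    · refine ⟨q0, ?_, ?_⟩
      · show ((∀ i, 0 ≤ q0 i) ∧ ∑ i, q0 i = 1) ∧ ∑ i, (q0 i - p i)^2/p i ≤ δ
        refine ⟨⟨fun i => ?_, hq0sum⟩, ?_⟩
        · simp only [hq0def]
          split
          · exact div_nonneg (hp0 i).le (hmpos ℓ).le
          · exact le_refl 0
        · have hIic : ∑ i ∈ Iic ℓ, (q0 i - p i)^2/p i = (1/m ℓ - 1)^2 * m ℓ := by
            have e1 : ∀ i ∈ Iic ℓ, (q0 i - p i)^2/p i = (1/m ℓ - 1)^2 * p i := by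
              intro i hi
              simp only [hq0def, if_pos (mem_Iic.mp hi)]
              field_simp [hp0' i, hmne ℓ]
            rw [Finset.sum_congr rfl e1, ← Finset.mul_sum]
            have h3 : (∑ i ∈ Iic ℓ, p i) = m ℓ := by simp only [hm]
            rw [h3]
          have hIoi2 : ∑ i ∈ Ioi ℓ, (q0 i - p i)^2/p i = 1 - m ℓ := by
            have e1 : ∀ i ∈ Ioi ℓ, (q0 i - p i)^2/p i = p i := by
              intro i hi
              rw [hq0Ioi i hi]
              field_simp [hp0' i]
              ring
            rw [Finset.sum_congr rfl e1, hIoi_p]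
          rw [hsplit ℓ (fun i => (q0 i - p i)^2/p i), hIic, hIoi2]
          have e2 : (1/m ℓ - 1)^2 * m ℓ + (1 - m ℓ) = (1 - m ℓ)/m ℓ := by
            field_simp [hmne ℓ]
            ring
          rw [e2]
          exact hkey1
      · show ∑ i, q0 i * f i = f z
        rw [hsplit ℓ]
        have h1 : ∑ i ∈ Ioi ℓ, q0 i * f i = 0 :=
          Finset.sum_eq_zero (fun i hi => by rw [hq0Ioi i hi, zero_mul])
        have h2 : ∑ i ∈ Iic ℓ, q0 i * f i = ∑ i ∈ Iic ℓ, p i * f z / m ℓ := by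
          refine Finset.sum_congr rfl (fun i hi => ?_)
          simp only [hq0def, if_pos (mem_Iic.mp hi), hconst i (mem_Iic.mp hi)]
          ring
        rw [h1, h2, add_zero, ← Finset.sum_div]
        rw [← Finset.sum_mul]
        have h3 : (∑ i ∈ Iic ℓ, p i) = m ℓ := by simp only [hm]
        rw [h3, mul_comm, mul_div_assoc, div_self (hmne ℓ), mul_one]
    · rintro y ⟨q, hqB, rfl⟩
      have hqB' : ((∀ i, 0 ≤ q i) ∧ ∑ i, q i = 1) ∧ ∑ i, (q i - p i)^2/p i ≤ δ := hqB
      obtain ⟨⟨hq0, hq1⟩, _⟩ := hqB'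
      calc f z = (∑ i, q i) * f z := by rw [hq1, one_mul]
        _ = ∑ i, q i * f z := by rw [Finset.sum_mul]
        _ ≤ ∑ i, q i * f i := Finset.sum_le_sum (fun i _ =>
            mul_le_mul_of_nonneg_left (hf0 i) (hq0 i))
  · -- case ℓ < r
    rw [if_neg hrl]
    have hlr : ℓ < r := lt_of_le_of_ne hrℓ (Ne.symm hrl)
    have hfrμ : 0 < f r - μ r := sub_pos.mpr (hμlt r r le_rfl hlr)
    have hsum_p : ∑ i ∈ Iic r, p i = m r := by simp only [hm]
    have hσpos : 0 < σ2 r := by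
      have h1 : 0 < p r * (f r - μ r)^2 := mul_pos (hp0 r) (pow_pos hfrμ 2)
      have h2 : p r * (f r - μ r)^2 ≤ ∑ i ∈ Iic r, p i * (f i - μ r)^2 :=
        Finset.single_le_sum (f := fun i => p i * (f i - μ r)^2)
          (fun i _ => mul_nonneg (hp0 i).le (sq_nonneg _)) (mem_Iic.mpr le_rfl)
      have h3 : m r * σ2 r = ∑ i ∈ Iic r, p i * (f i - μ r)^2 := by
        simp only [hσ2]; field_simp
        exact mul_div_cancel_left₀ _ (hmne r)
      have h4 : 0 < m r * σ2 r := by rw [h3]; linarith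
      by_contra h
      push_neg at h
      nlinarith [hmpos r]
    have hkey2 : ∀ (k : Fin n), (k:ℕ) = (r:ℕ)+1 →
        (σ2 r / (f k - μ r)^2 + 1 - m r) / m r ≤ δ := by
      intro k hk
      have := hr2 k (by simp only [Fin.lt_def]; omega)
      rwa [hδc_succ r k hk hrℓ] at this
    have hμksub : ∀ (k : Fin n), (r:ℕ) < (k:ℕ) → 0 < f k - μ r := by
      intro k hk
      refine sub_pos.mpr (hμlt r k ?_ ?_)
      · simp only [Fin.le_def]; omega
      · have : (ℓ:ℕ) < (r:ℕ) := hlr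
        simp only [Fin.lt_def]; omega
    have hTnn : 0 ≤ m r * δ - (1 - m r) := by
      by_cases hl : (r:ℕ)+1 = n
      · rw [hmlast r hl]; linarith
      · have hlt : (r:ℕ)+1 < n := lt_of_le_of_ne r.isLt hl
        have h := hkey2 ⟨(r:ℕ)+1, hlt⟩ rfl
        have hck : 0 < f (⟨(r:ℕ)+1, hlt⟩ : Fin n) - μ r := hμksub _ (by simp)
        have h2 : σ2 r/(f (⟨(r:ℕ)+1, hlt⟩ : Fin n) - μ r)^2 + 1 - m r ≤ δ * m r :=
          (div_le_iff₀ (hmpos r)).mp h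
        have h3 : 0 < σ2 r/(f (⟨(r:ℕ)+1, hlt⟩ : Fin n) - μ r)^2 :=
          div_pos hσpos (pow_pos hck 2)
        nlinarith
    obtain ⟨t, htdef⟩ : ∃ t : ℝ, t = Real.sqrt (m r * δ - (1 - m r)) / Real.sqrt (σ2 r) :=
      ⟨_, rfl⟩
    have htnn : 0 ≤ t := by
      rw [htdef]; exact div_nonneg (Real.sqrt_nonneg _) (Real.sqrt_nonneg _)
    have ht2 : t^2 * σ2 r = m r * δ - (1 - m r) := by
      rw [htdef, div_pow, Real.sq_sqrt hTnn, Real.sq_sqrt (hσnn r)]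
      exact div_mul_cancel₀ _ hσpos.ne'
    have htσ : t * σ2 r = Real.sqrt (σ2 r) * Real.sqrt (m r * δ - (1 - m r)) := by
      rw [htdef, div_mul_eq_mul_div, mul_div_assoc, Real.div_sqrt]
      ring
    have hub : t * (f r - μ r) < 1 := by
      have h := hr1 hlr
      simp only [hδc] at h
      have h2 : m r * δ < σ2 r/(f r - μ r)^2 + 1 - m r := by
        rw [one_div, inv_mul_eq_div] at h
        have h3 := (lt_div_iff₀ (hmpos r)).mp h
        linarith
      have h4 : (m r * δ - (1 - m r)) * (f r - μ r)^2 < σ2 r := by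
        have h5 : m r * δ - (1 - m r) < σ2 r / (f r - μ r)^2 := by linarith
        exact (lt_div_iff₀ (pow_pos hfrμ 2)).mp h5
      have h6 : (t*(f r - μ r))^2 * σ2 r < σ2 r := by
        have e6 : (t*(f r - μ r))^2 * σ2 r = (t^2 * σ2 r) * (f r - μ r)^2 := by ring
        rw [e6, ht2]; exact h4
      have h7 : (t*(f r - μ r))^2 < 1 := by nlinarith [hσpos]
      nlinarith [h7, htnn, sq_nonneg (t*(f r - μ r) - 1)]
    obtain ⟨qs, hqsdef⟩ : ∃ qs : Fin n → ℝ,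
        qs = fun i => if i ≤ r then p i / m r * (1 - t * (f i - μ r)) else 0 := ⟨_, rfl⟩
    have hcoef : ∀ i : Fin n, i ≤ r → 0 ≤ 1 - t * (f i - μ r) := by
      intro i hi
      have h1 : t * (f i - μ r) ≤ t * (f r - μ r) :=
        mul_le_mul_of_nonneg_left (by have := hf hi; linarith) htnn
      linarith
    have hqsIoi : ∀ i ∈ Ioi r, qs i = 0 := fun i hi => by
      simp only [hqsdef, if_neg (not_le.mpr (mem_Ioi.mp hi))]
    have hqs_nonneg : ∀ i, 0 ≤ qs i := by
      intro i
      simp only [hqsdef]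
      split
      · next hi => exact mul_nonneg (div_nonneg (hp0 i).le (hmpos r).le) (hcoef i hi)
      · exact le_refl 0
    have hqs_sum : ∑ i, qs i = 1 := by
      rw [hsplit r, Finset.sum_eq_zero hqsIoi, add_zero]
      have e : ∑ i ∈ Iic r, qs i
          = (1/m r) * (∑ i ∈ Iic r, p i) - (t/m r) * (∑ i ∈ Iic r, p i * f i)
            + (t * μ r/m r) * (∑ i ∈ Iic r, p i) := by
        rw [Finset.mul_sum, Finset.mul_sum, Finset.mul_sum, ← Finset.sum_sub_distrib,
          ← Finset.sum_add_distrib]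
        refine Finset.sum_congr rfl (fun i hi => ?_)
        simp only [hqsdef, if_pos (mem_Iic.mp hi)]
        ring
      rw [e, hsum_p, hS1 r]
      field_simp [hmne r]
      ring
    have hqs_f : ∑ i, qs i * f i = μ r - t * σ2 r := by
      rw [hsplit r]
      have h1 : ∑ i ∈ Ioi r, qs i * f i = 0 :=
        Finset.sum_eq_zero (fun i hi => by rw [hqsIoi i hi, zero_mul])
      have e : ∑ i ∈ Iic r, qs i * f i
          = (1/m r) * (∑ i ∈ Iic r, p i * f i) - (t/m r) * (∑ i ∈ Iic r, p i * f i^2)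
            + (t * μ r/m r) * (∑ i ∈ Iic r, p i * f i) := by
        rw [Finset.mul_sum, Finset.mul_sum, Finset.mul_sum, ← Finset.sum_sub_distrib,
          ← Finset.sum_add_distrib]
        refine Finset.sum_congr rfl (fun i hi => ?_)
        simp only [hqsdef, if_pos (mem_Iic.mp hi)]
        ring
      rw [h1, add_zero, e, hS1 r, hS2σ r]
      field_simp [hmne r]
      ring
    have hqs_chi : ∑ i, (qs i - p i)^2/p i = δ := by
      rw [hsplit r]
      have hIoi2 : ∑ i ∈ Ioi r, (qs i - p i)^2/p i = 1 - m r := by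
        have e1 : ∀ i ∈ Ioi r, (qs i - p i)^2/p i = p i := by
          intro i hi
          rw [hqsIoi i hi]
          field_simp [hp0' i]
          ring
        rw [Finset.sum_congr rfl e1, hIoi_p]
      have e : ∑ i ∈ Iic r, (qs i - p i)^2/p i
          = ((1 - m r + t*μ r)^2/(m r)^2) * (∑ i ∈ Iic r, p i)
            - (2*(1 - m r + t*μ r)*t/(m r)^2) * (∑ i ∈ Iic r, p i * f i)
            + (t^2/(m r)^2) * (∑ i ∈ Iic r, p i * f i^2) := by
        rw [Finset.mul_sum, Finset.mul_sum, Finset.mul_sum, ← Finset.sum_sub_distrib,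
          ← Finset.sum_add_distrib]
        refine Finset.sum_congr rfl (fun i hi => ?_)
        simp only [hqsdef, if_pos (mem_Iic.mp hi)]
        exact chi_point (p i) (m r) t (μ r) (f i) (hp0' i) (hmne r)
      rw [e, hsum_p, hS1 r, hS2σ r, hIoi2]
      field_simp [hmne r]
      linear_combination ht2
    constructor
    · refine ⟨qs, ?_, ?_⟩
      · show ((∀ i, 0 ≤ qs i) ∧ ∑ i, qs i = 1) ∧ ∑ i, (qs i - p i)^2/p i ≤ δ
        exact ⟨⟨hqs_nonneg, hqs_sum⟩, le_of_eq hqs_chi⟩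
      · show ∑ i, qs i * f i = μ r - Real.sqrt (σ2 r) * Real.sqrt (m r * δ - (1 - m r))
        rw [hqs_f, htσ]
    · rintro y ⟨q, hqB, rfl⟩
      have hqB' : ((∀ i, 0 ≤ q i) ∧ ∑ i, q i = 1) ∧ ∑ i, (q i - p i)^2/p i ≤ δ := hqB
      obtain ⟨⟨hq0, hq1⟩, hq2⟩ := hqB'
      show μ r - Real.sqrt (σ2 r) * Real.sqrt (m r * δ - (1 - m r)) ≤ ∑ i, q i * f i
      by_cases hT0 : m r * δ - (1 - m r) = 0
      · -- degenerate case : r is last, δ = 0, feasible set is {p}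
        have hlast : (r:ℕ)+1 = n := by
          by_contra hl
          have hlt : (r:ℕ)+1 < n := lt_of_le_of_ne r.isLt hl
          have h := hkey2 ⟨(r:ℕ)+1, hlt⟩ rfl
          have hck : 0 < f (⟨(r:ℕ)+1, hlt⟩ : Fin n) - μ r := hμksub _ (by simp)
          have h2 : σ2 r/(f (⟨(r:ℕ)+1, hlt⟩ : Fin n) - μ r)^2 + 1 - m r ≤ δ * m r :=
            (div_le_iff₀ (hmpos r)).mp h
          have h3 : 0 < σ2 r/(f (⟨(r:ℕ)+1, hlt⟩ : Fin n) - μ r)^2 :=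
            div_pos hσpos (pow_pos hck 2)
          nlinarith
        have hm1 : m r = 1 := hmlast r hlast
        have hδ0 : δ = 0 := by rw [hm1] at hT0; linarith
        have hqp : ∀ i, q i = p i := by
          have hz2 : ∀ i ∈ (univ : Finset (Fin n)), (q i - p i)^2/p i = 0 := by
            rw [← Finset.sum_eq_zero_iff_of_nonneg
              (fun i _ => div_nonneg (sq_nonneg _) (hp0 i).le)]
            have h6 : 0 ≤ ∑ i, (q i - p i)^2/p i :=
              Finset.sum_nonneg (fun i _ => div_nonneg (sq_nonneg _) (hp0 i).le)
            rw [hδ0] at hq2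
            linarith
          intro i
          have h7 := hz2 i (mem_univ i)
          rw [div_eq_zero_iff] at h7
          rcases h7 with h7 | h7
          · have := pow_eq_zero_iff (n := 2) (by norm_num) |>.mp h7
            linarith [sub_eq_zero.mp this]
          · exact absurd h7 (hp0' i)
        have hval : ∑ i, q i * f i = μ r := by
          have e1 : ∑ i, q i * f i = ∑ i, p i * f i :=
            Finset.sum_congr rfl (fun i _ => by rw [hqp i])
          have e2 : ∑ i ∈ Ioi r, p i * f i = 0 := by
            refine Finset.sum_eq_zero (fun i hi => ?_)
            exfalso
            have := mem_Ioi.mp hi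
            simp only [Fin.lt_def] at this
            have := i.isLt
            omega
          rw [e1, hsplit r (fun i => p i * f i), e2, add_zero, hS1 r, hm1, one_mul]
        rw [hT0, Real.sqrt_zero, mul_zero, sub_zero, hval]
      · have hTpos : 0 < m r * δ - (1 - m r) := lt_of_le_of_ne hTnn (Ne.symm hT0)
        have htpos : 0 < t := by
          rw [htdef]; exact div_pos (Real.sqrt_pos.mpr hTpos) (Real.sqrt_pos.mpr hσpos)
        have hk1 : ∀ i : Fin n, r < i → 1 ≤ t * (f i - μ r) := by
          intro i hi
          simp only [Fin.lt_def] at hi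
          have hlt : (r:ℕ)+1 < n := lt_of_le_of_lt (by omega) i.isLt
          have h := hkey2 ⟨(r:ℕ)+1, hlt⟩ rfl
          have hck : 0 < f (⟨(r:ℕ)+1, hlt⟩ : Fin n) - μ r := hμksub _ (by simp)
          have h2 : σ2 r/(f (⟨(r:ℕ)+1, hlt⟩ : Fin n) - μ r)^2 + 1 - m r ≤ δ * m r :=
            (div_le_iff₀ (hmpos r)).mp h
          have h3 : σ2 r / (f (⟨(r:ℕ)+1, hlt⟩ : Fin n) - μ r)^2 ≤ t^2 * σ2 r := by
            rw [ht2]; linarith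
          have h4 : σ2 r ≤ t^2 * σ2 r * (f (⟨(r:ℕ)+1, hlt⟩ : Fin n) - μ r)^2 :=
            (div_le_iff₀ (pow_pos hck 2)).mp h3
          have h4' : σ2 r ≤ (t * (f (⟨(r:ℕ)+1, hlt⟩ : Fin n) - μ r))^2 * σ2 r := by
            have e6 : (t * (f (⟨(r:ℕ)+1, hlt⟩ : Fin n) - μ r))^2 * σ2 r
                = t^2 * σ2 r * (f (⟨(r:ℕ)+1, hlt⟩ : Fin n) - μ r)^2 := by ring
            rw [e6]; exact h4
          have h5a : 1 ≤ (t * (f (⟨(r:ℕ)+1, hlt⟩ : Fin n) - μ r))^2 := by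
            nlinarith [hσpos]
          have h5 : 1 ≤ t * (f (⟨(r:ℕ)+1, hlt⟩ : Fin n) - μ r) := by
            nlinarith [h5a, mul_pos htpos hck]
          have h6 : f (⟨(r:ℕ)+1, hlt⟩ : Fin n) ≤ f i := hf (by simp only [Fin.le_def]; omega)
          have h7 := mul_le_mul_of_nonneg_left h6 htpos.le
          linarith
        have hν : ∀ i : Fin n, μ r + (1 - m r)/t ≤ f i + (m r/t) * ((qs i - p i)/p i) := by
          intro i
          by_cases hi : i ≤ r
          · refine le_of_eq ?_
            simp only [hqsdef, if_pos hi]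
            field_simp [hp0' i, hmne r, htpos.ne']
            ring
          · have hri : r < i := not_le.mp hi
            have h1 := hk1 i hri
            simp only [hqsdef, if_neg hi]
            have e : (0 - p i)/p i = -1 := by
              rw [zero_sub, neg_div, div_self (hp0' i)]
            rw [e]
            have h2 : 1/t ≤ f i - μ r := by
              rw [div_le_iff₀ htpos]
              linarith [h1]
            have e2 : (1 - m r)/t = 1/t - m r/t := sub_div 1 (m r) t
            linarith [h2]
        have hsum1 : ∑ i, q i * (μ r + (1 - m r)/t) = μ r + (1 - m r)/t := by
          rw [← Finset.sum_mul, hq1, one_mul]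
        have hsum2 : ∑ i, q i * (f i + (m r/t) * ((qs i - p i)/p i))
            = ∑ i, q i * f i + (m r/t) * ∑ i, q i * ((qs i - p i)/p i) := by
          rw [Finset.mul_sum, ← Finset.sum_add_distrib]
          exact Finset.sum_congr rfl (fun i _ => by ring)
        have hchain : μ r + (1 - m r)/t
            ≤ ∑ i, q i * f i + (m r/t) * ∑ i, q i * ((qs i - p i)/p i) := by
          rw [← hsum1, ← hsum2]
          exact Finset.sum_le_sum (fun i _ => mul_le_mul_of_nonneg_left (hν i) (hq0 i))
        have hinner : ∑ i, q i * ((qs i - p i)/p i) ≤ δ := by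
          have e0 : ∑ i, p i * ((qs i - p i)/p i) = 0 := by
            have e1 : ∀ i ∈ (univ : Finset (Fin n)), p i * ((qs i - p i)/p i) = qs i - p i :=
              fun i _ => by
                field_simp
                exact mul_div_cancel_left₀ _ (hp0' i)
            rw [Finset.sum_congr rfl e1, Finset.sum_sub_distrib, hqs_sum, hp1, sub_self]
          have e2 : ∀ i ∈ (univ : Finset (Fin n)), (q i - p i) * ((qs i - p i)/p i)
              ≤ ((q i - p i)^2/p i + (qs i - p i)^2/p i)/2 := by
            intro i _
            rw [← add_div, div_div, ← mul_div_assoc,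
              div_le_div_iff₀ (hp0 i) (mul_pos (hp0 i) two_pos)]
            nlinarith [sq_nonneg (q i - qs i), hp0 i]
          have e3 : ∑ i, (q i - p i) * ((qs i - p i)/p i) ≤ δ := by
            calc ∑ i, (q i - p i) * ((qs i - p i)/p i)
                ≤ ∑ i, ((q i - p i)^2/p i + (qs i - p i)^2/p i)/2 := Finset.sum_le_sum e2
              _ = ((∑ i, (q i - p i)^2/p i) + (∑ i, (qs i - p i)^2/p i))/2 := by
                  rw [← Finset.sum_div, ← Finset.sum_add_distrib]
              _ ≤ (δ + δ)/2 := by rw [hqs_chi]; linarith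
              _ = δ := by ring
          have e4 : ∑ i, q i * ((qs i - p i)/p i)
              = ∑ i, (q i - p i) * ((qs i - p i)/p i) + ∑ i, p i * ((qs i - p i)/p i) := by
            rw [← Finset.sum_add_distrib]
            exact Finset.sum_congr rfl (fun i _ => by ring)
          rw [e4, e0, add_zero]
          exact e3
        have hmt : (0:ℝ) ≤ m r / t := (div_pos (hmpos r) htpos).le
        have hfinal : μ r + (1 - m r)/t - (m r/t)*δ ≤ ∑ i, q i * f i := by
          have h8 := mul_le_mul_of_nonneg_left hinner hmt
          linarith [hchain]
        have hA : μ r - Real.sqrt (σ2 r) * Real.sqrt (m r * δ - (1 - m r))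
            = μ r + (1 - m r)/t - (m r/t)*δ := by
          rw [← htσ]
          have e5 : t * σ2 r = (m r * δ - (1 - m r))/t := by
            rw [eq_div_iff htpos.ne']
            linear_combination ht2
          rw [e5]
          field_simp
          ring
        rw [hA]
        exact hfinal
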